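/- Let n ≥ 1 and let v_0,…,v_n be affinely independent points in ℝ^n forming an n-simplex S, with vertex Gramians G_0,…,G_n. Then the following are equivalent: (i) for some ℓ ∈ {0,…,n}, the inverse of G_ℓ is a weakly diagonally dominant Stieltjes matrix; (ii) for every ℓ ∈ {0,…,n}, all off-diagonal entries of the inverse of G_ℓ are nonpositive (i.e., G_ℓ⁻¹ is a Stieltjes matrix); (iii) for every ℓ ∈ {0,…,n}, the inverse of G_ℓ is weakly diagonally dominant; (iv) for every j ∈ {0,…,n}, the orthogonal projection of v_j onto the affine span of {v_k : k ≠ j} lies in the convex hull of {v_k : k ≠ j}. -/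

import Mathlib

open Matrix Finset
open scoped RealInnerProductSpace

noncomputable section

/-- The vertex Gramian of the simplex with vertices `v` associated with vertex `v ℓ`. -/
def vGram {n : ℕ} (v : Fin (n + 1) → EuclideanSpace ℝ (Fin n)) (ℓ : Fin (n + 1)) :
    Matrix {k : Fin (n + 1) // k ≠ ℓ} {k : Fin (n + 1) // k ≠ ℓ} ℝ :=
  Matrix.of fun i j => ⟪v i.1 - v ℓ, v j.1 - v ℓ⟫

/-- A Stieltjes matrix: symmetric positive definite with nonpositive off-diagonal entries. -/
def IsStieltjes {ι : Type*} [Fintype ι] (M : Matrix ι ι ℝ) : Prop :=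
  M.PosDef ∧ ∀ i j, i ≠ j → M i j ≤ 0

/-- Weakly diagonally dominant: `M e ≥ 0` entrywise for the all-ones vector `e`. -/
def IsWDD {ι : Type*} [Fintype ι] (M : Matrix ι ι ℝ) : Prop :=
  ∀ i, 0 ≤ ∑ j, M i j

/-- Pointwise weakly diagonally dominant: each diagonal entry is maximal in its row. -/
def PWDD {ι : Type*} (M : Matrix ι ι ℝ) : Prop :=
  ∀ i j, M i j ≤ M i i

/-- The orthogonal projection of `x` onto the affine span of `{v k : k ∈ s}`
lies in the convex hull of `{v k : k ∈ s}`. -/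
def ProjInHull {n : ℕ} (x : EuclideanSpace ℝ (Fin n))
    (v : Fin (n + 1) → EuclideanSpace ℝ (Fin n)) (s : Set (Fin (n + 1))) : Prop :=
  ∃ p ∈ convexHull ℝ (v '' s), ∀ a ∈ s, ∀ b ∈ s, ⟪x - p, v a - v b⟫ = 0

/-- All facets of the simplex are nonobtuse: each vertex `v i` projects, for each `j ≠ i`,
into the convex hull of the vertices other than `v i, v j`. -/
def FacetsNonobtuse {n : ℕ} (v : Fin (n + 1) → EuclideanSpace ℝ (Fin n)) : Prop :=
  ∀ i j : Fin (n + 1), i ≠ j → ProjInHull (v i) v {k | k ≠ i ∧ k ≠ j}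

/-- `q` is an inward normal to the facet opposite `v j`. -/
def IsInwardNormal {n : ℕ} (v : Fin (n + 1) → EuclideanSpace ℝ (Fin n)) (j : Fin (n + 1))
    (q : EuclideanSpace ℝ (Fin n)) : Prop :=
  q ≠ 0 ∧ (∀ a b : Fin (n + 1), a ≠ j → b ≠ j → ⟪q, v a - v b⟫ = 0) ∧
    ∀ k : Fin (n + 1), k ≠ j → 0 < ⟪q, v j - v k⟫

/-- The `j`-th column of `A` is a blocking column: no off-diagonal entry of column `j`
is minimal in its row. -/
def IsBlockingCol {ι : Type*} (A : Matrix ι ι ℝ) (j : ι) : Prop :=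
  ∀ i, i ≠ j → ∃ k, A i k < A i j

/-- `A` is nonblocking: every column has an off-diagonal entry minimal in its row. -/
def IsNonblocking {ι : Type*} (A : Matrix ι ι ℝ) : Prop :=
  ∀ j, ∃ i, i ≠ j ∧ ∀ k, A i j ≤ A i k

/-- A (symmetric nonnegative) ultrametric matrix. -/
def IsUltra {ι : Type*} (A : Matrix ι ι ℝ) : Prop :=
  (∀ i j, 0 ≤ A i j) ∧ (∀ i j, A i j ≤ A i i) ∧ ∀ i j k, min (A i k) (A k j) ≤ A i j

/-- The principal submatrix of `A` with rows and columns restricted to `s`. -/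
def subMat {ι : Type*} (A : Matrix ι ι ℝ) (s : Finset ι) :
    Matrix {x // x ∈ s} {x // x ∈ s} ℝ :=
  A.submatrix (fun i => i.1) (fun j => j.1)

/-- The principal submatrix of `A` obtained by deleting row and column `m`. -/
def delMat {ι : Type*} (A : Matrix ι ι ℝ) (m : ι) : Matrix {i // i ≠ m} {i // i ≠ m} ℝ :=
  A.submatrix (fun i => i.1) (fun j => j.1)

section Tetra

variable {V : Type*} [NormedAddCommGroup V] [InnerProductSpace ℝ V]

/-- The triangle with vertices `a, b, c` is nonobtuse. -/
def NonobtuseTri (a b c : V) : Prop :=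
  0 ≤ ⟪b - a, c - a⟫ ∧ 0 ≤ ⟪a - b, c - b⟫ ∧ 0 ≤ ⟪a - c, b - c⟫

/-- The sub-orthocentric set of the triangle `a b c`: the union over the vertices of the
closed segments from the vertex to the orthocenter. -/
def SubOrthoSet (a b c : V) : Set V :=
  {x | ∃ h, h ∈ affineSpan ℝ ({a, b, c} : Set V) ∧
    ⟪h - a, b - c⟫ = 0 ∧ ⟪h - b, a - c⟫ = 0 ∧
    (x ∈ segment ℝ a h ∨ x ∈ segment ℝ b h ∨ x ∈ segment ℝ c h)}

/-- `p` is the orthogonal projection of `x` onto the affine span of `{a, b, c}`. -/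
def IsOrthProjTri (x p a b c : V) : Prop :=
  p ∈ affineSpan ℝ ({a, b, c} : Set V) ∧ ⟪x - p, b - a⟫ = 0 ∧ ⟪x - p, c - a⟫ = 0

/-- A sub-orthocentric tetrahedron: all triangular faces are nonobtuse and each vertex
projects orthogonally into the sub-orthocentric set of its opposite face. -/
def IsSubOrthoTetra (w : Fin 4 → V) : Prop :=
  ∀ i : Fin 4,
    NonobtuseTri (w (i.succAbove 0)) (w (i.succAbove 1)) (w (i.succAbove 2)) ∧
    ∃ p, IsOrthProjTri (w i) p (w (i.succAbove 0)) (w (i.succAbove 1)) (w (i.succAbove 2)) ∧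
      p ∈ SubOrthoSet (w (i.succAbove 0)) (w (i.succAbove 1)) (w (i.succAbove 2))

end Tetra

namespace Stmt0Aux

variable {n : ℕ} {v : Fin (n + 1) → EuclideanSpace ℝ (Fin n)}

lemma card_compl (ℓ : Fin (n + 1)) : Fintype.card {k : Fin (n + 1) // k ≠ ℓ} = n := by
  simp [Fintype.card_subtype_compl]

def bB (hv : AffineIndependent ℝ v) (hn : 1 ≤ n) (ℓ : Fin (n + 1)) :
    Module.Basis {k : Fin (n + 1) // k ≠ ℓ} ℝ (EuclideanSpace ℝ (Fin n)) :=
  haveI : Nonempty {k : Fin (n + 1) // k ≠ ℓ} := by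
    rw [← Fintype.card_pos_iff, card_compl]; omega
  basisOfLinearIndependentOfCardEqFinrank
    ((affineIndependent_iff_linearIndependent_vsub ℝ v ℓ).mp hv)
    (by rw [card_compl, finrank_euclideanSpace, Fintype.card_fin])

lemma bB_apply (hv : AffineIndependent ℝ v) (hn : 1 ≤ n) (ℓ : Fin (n + 1))
    (k : {k : Fin (n + 1) // k ≠ ℓ}) : bB hv hn ℓ k = v k.1 - v ℓ := by
  simp [bB, coe_basisOfLinearIndependentOfCardEqFinrank]

/-- dual vectors w.r.t. base vertex 0 -/
def mvec (hv : AffineIndependent ℝ v) (hn : 1 ≤ n)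
    (k : {k : Fin (n + 1) // k ≠ (0 : Fin (n + 1))}) : EuclideanSpace ℝ (Fin n) :=
  (InnerProductSpace.toDual ℝ _).symm
    (LinearMap.toContinuousLinearMap ((bB hv hn 0).coord k))

lemma inner_mvec (hv : AffineIndependent ℝ v) (hn : 1 ≤ n)
    (k : {k : Fin (n + 1) // k ≠ (0 : Fin (n + 1))}) (x : EuclideanSpace ℝ (Fin n)) :
    ⟪mvec hv hn k, x⟫ = (bB hv hn 0).repr x k := by
  rw [mvec, InnerProductSpace.toDual_symm_apply]
  simp [Module.Basis.coord_apply]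

def nvec (hv : AffineIndependent ℝ v) (hn : 1 ≤ n) (i : Fin (n + 1)) :
    EuclideanSpace ℝ (Fin n) :=
  if h : i = 0 then -∑ k, mvec hv hn k else mvec hv hn ⟨i, h⟩

lemma inner_nvec (hv : AffineIndependent ℝ v) (hn : 1 ≤ n) (i a b : Fin (n + 1)) :
    ⟪nvec hv hn i, v a - v b⟫ =
      (if i = a then (1 : ℝ) else 0) - (if i = b then (1 : ℝ) else 0) := by
  have key : ∀ a : Fin (n + 1), ⟪nvec hv hn i, v a - v 0⟫ =
      (if i = a then (1 : ℝ) else 0) - (if i = 0 then (1 : ℝ) else 0) := by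
    intro a
    have base : ∀ (k : {k : Fin (n + 1) // k ≠ (0 : Fin (n + 1))}) (ha : a ≠ 0),
        ⟪mvec hv hn k, v a - v 0⟫ = if (⟨a, ha⟩ : {k : Fin (n + 1) // k ≠ (0 : Fin (n + 1))}) = k then (1:ℝ) else 0 := by
      intro k ha
      rw [inner_mvec, ← bB_apply hv hn 0 ⟨a, ha⟩, Module.Basis.repr_self, Finsupp.single_apply]
    by_cases ha : a = 0
    · subst ha; simp
    · by_cases hi : i = 0
      · subst hi
        have h0 : nvec hv hn 0 = -∑ k, mvec hv hn k := dif_pos rfl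
        rw [h0, inner_neg_left, sum_inner]
        have : ∀ k : {k : Fin (n + 1) // k ≠ (0 : Fin (n + 1))},
            ⟪mvec hv hn k, v a - v 0⟫ = if (⟨a, ha⟩ : {k : Fin (n + 1) // k ≠ (0 : Fin (n + 1))}) = k then (1:ℝ) else 0 :=
          fun k => base k ha
        rw [Finset.sum_congr rfl fun k _ => this k]
        simp [Finset.sum_ite_eq, ha, Ne.symm ha]
      · have h0 : nvec hv hn i = mvec hv hn ⟨i, hi⟩ := dif_neg hi
        rw [h0, base ⟨i, hi⟩ ha]
        have : ((⟨a, ha⟩ : {k : Fin (n + 1) // k ≠ (0 : Fin (n + 1))}) = ⟨i, hi⟩) ↔ (i = a) := by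
          simp [Subtype.ext_iff, eq_comm]
        simp [this, hi]
  have : v a - v b = (v a - v 0) - (v b - v 0) := by abel
  rw [this, inner_sub_right, key a, key b]
  ring


lemma repr_eq (hv : AffineIndependent ℝ v) (hn : 1 ≤ n) (ℓ : Fin (n + 1))
    (x : EuclideanSpace ℝ (Fin n)) (k : {k : Fin (n + 1) // k ≠ ℓ}) :
    (bB hv hn ℓ).repr x k = ⟪nvec hv hn k.1, x⟫ := by
  conv_rhs => rw [← Module.Basis.sum_repr (bB hv hn ℓ) x]
  rw [inner_sum]
  have : ∀ a : {k : Fin (n + 1) // k ≠ ℓ},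
      ⟪nvec hv hn k.1, (bB hv hn ℓ).repr x a • bB hv hn ℓ a⟫ =
      if k = a then (bB hv hn ℓ).repr x a else 0 := by
    intro a
    rw [real_inner_smul_right, bB_apply, inner_nvec]
    have h1 : (k.1 = a.1) ↔ (k = a) := Subtype.ext_iff.symm
    by_cases h : k = a
    · simp [h, a.2, h1]
    · simp [h, h1, if_neg (fun hh => h (Subtype.ext hh)), k.2]
  rw [Finset.sum_congr rfl fun a _ => this a]
  simp

lemma expand (hv : AffineIndependent ℝ v) (hn : 1 ≤ n) (ℓ : Fin (n + 1))
    (x : EuclideanSpace ℝ (Fin n)) :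
    ∑ k : {k : Fin (n + 1) // k ≠ ℓ}, ⟪nvec hv hn k.1, x⟫ • (v k.1 - v ℓ) = x := by
  conv_rhs => rw [← Module.Basis.sum_repr (bB hv hn ℓ) x]
  refine Finset.sum_congr rfl fun k _ => ?_
  rw [repr_eq, bB_apply]

/-- if x is orthogonal to all facet-direction basis vectors then x = 0 -/
lemma perp_basis (hv : AffineIndependent ℝ v) (hn : 1 ≤ n) (ℓ : Fin (n + 1))
    (x : EuclideanSpace ℝ (Fin n)) (h : ∀ k : Fin (n + 1), k ≠ ℓ → ⟪x, v k - v ℓ⟫ = 0) :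
    x = 0 := by
  rw [← inner_self_eq_zero (𝕜 := ℝ)]
  have hx : (⟪x, x⟫ : ℝ) = ⟪x, ∑ k : {k : Fin (n + 1) // k ≠ ℓ},
      ⟪nvec hv hn k.1, x⟫ • (v k.1 - v ℓ)⟫ := by rw [expand]
  rw [hx, inner_sum]
  refine Finset.sum_eq_zero fun k _ => ?_
  rw [real_inner_smul_right, h k.1 k.2, mul_zero]

/-- if ⟪nvec a, x⟫ = 0 for all a ≠ ℓ then x = 0 -/
lemma perp_nvec (hv : AffineIndependent ℝ v) (hn : 1 ≤ n) (ℓ : Fin (n + 1))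
    (x : EuclideanSpace ℝ (Fin n)) (h : ∀ a : Fin (n + 1), a ≠ ℓ → ⟪nvec hv hn a, x⟫ = 0) :
    x = 0 := by
  have := expand hv hn ℓ x
  rw [← this]
  refine Finset.sum_eq_zero fun k _ => ?_
  rw [h k.1 k.2, zero_smul]

lemma sum_nvec (hv : AffineIndependent ℝ v) (hn : 1 ≤ n) :
    ∑ i, nvec hv hn i = 0 := by
  refine perp_basis hv hn 0 _ fun k hk => ?_
  rw [sum_inner]
  have : ∀ i : Fin (n + 1), ⟪nvec hv hn i, v k - v 0⟫ =
      (if i = k then (1:ℝ) else 0) - (if i = 0 then (1:ℝ) else 0) := fun i => inner_nvec hv hn i k 0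
  rw [Finset.sum_congr rfl fun i _ => this i]
  rw [Finset.sum_sub_distrib]
  simp

lemma sum_nvec_compl (hv : AffineIndependent ℝ v) (hn : 1 ≤ n) (ℓ : Fin (n + 1)) :
    ∑ k : {k : Fin (n + 1) // k ≠ ℓ}, nvec hv hn k.1 = -nvec hv hn ℓ := by
  have h2 := sum_nvec hv hn
  rw [← Finset.add_sum_erase Finset.univ (nvec hv hn) (Finset.mem_univ ℓ)] at h2
  have h1 : ∑ i ∈ Finset.univ.erase ℓ, nvec hv hn i
      = ∑ k : {k : Fin (n + 1) // k ≠ ℓ}, nvec hv hn k.1 :=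
    Finset.sum_subtype _ (fun x => by simp) _
  rw [h1] at h2
  exact eq_neg_of_add_eq_zero_right h2

lemma nvec_pos (hv : AffineIndependent ℝ v) (hn : 1 ≤ n) (j : Fin (n + 1)) :
    0 < ⟪nvec hv hn j, nvec hv hn j⟫ := by
  haveI : Nontrivial (Fin (n + 1)) := by rw [Fin.nontrivial_iff_two_le]; omega
  obtain ⟨ℓ, hℓ⟩ := exists_ne j
  rcases eq_or_lt_of_le (real_inner_self_nonneg (x := nvec hv hn j)) with h0 | h0
  · exfalso
    have hz : nvec hv hn j = 0 := inner_self_eq_zero.mp h0.symm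
    have := inner_nvec hv hn j j ℓ
    rw [hz] at this
    simp [Ne.symm hℓ] at this
  · exact h0


lemma inner_self_pos' {x : EuclideanSpace ℝ (Fin n)} (hx : x ≠ 0) : 0 < (⟪x, x⟫ : ℝ) := by
  rcases eq_or_lt_of_le (real_inner_self_nonneg (x := x)) with h0 | h0
  · exact absurd (inner_self_eq_zero.mp h0.symm) hx
  · exact h0

lemma vGram_posdef (hv : AffineIndependent ℝ v) (hn : 1 ≤ n) (ℓ : Fin (n + 1)) :
    (vGram v ℓ).PosDef := by
  refine Matrix.PosDef.of_dotProduct_mulVec_pos ?_ ?_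
  · ext i j
    simp only [Matrix.conjTranspose_apply, vGram, Matrix.of_apply, star_trivial]
    exact real_inner_comm _ _
  · intro x hx
    set y : EuclideanSpace ℝ (Fin n) :=
      ∑ k : {k : Fin (n + 1) // k ≠ ℓ}, x k • (v k.1 - v ℓ) with hy
    have hdot : dotProduct (star x) (vGram v ℓ *ᵥ x) = ⟪y, y⟫ := by
      rw [hy, sum_inner, dotProduct]
      refine Finset.sum_congr rfl fun i _ => ?_
      rw [star_trivial, real_inner_smul_left, Matrix.mulVec, dotProduct, inner_sum]
      congr 1
      refine Finset.sum_congr rfl fun k _ => ?_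
      rw [real_inner_smul_right, vGram, Matrix.of_apply, mul_comm]
    rw [hdot]
    refine inner_self_pos' fun hy0 => hx ?_
    have hli := Fintype.linearIndependent_iff.mp (bB hv hn ℓ).linearIndependent x
    have : ∑ k, x k • bB hv hn ℓ k = 0 := by
      rw [show ∀ f g : {k : Fin (n+1) // k ≠ ℓ} → EuclideanSpace ℝ (Fin n), f = g → ∑ k, x k • f k = ∑ k, x k • g k from fun f g h => by rw [h]]
      · rw [← hy]; exact hy0
      · funext k; exact bB_apply hv hn ℓ k
    exact funext (hli this)

lemma vGram_inv (hv : AffineIndependent ℝ v) (hn : 1 ≤ n) (ℓ : Fin (n + 1)) :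
    (vGram v ℓ)⁻¹ =
      Matrix.of (fun i j : {k : Fin (n + 1) // k ≠ ℓ} => ⟪nvec hv hn i.1, nvec hv hn j.1⟫) := by
  apply Matrix.inv_eq_right_inv
  ext i j
  rw [Matrix.mul_apply]
  have h1 : ∀ k : {k : Fin (n + 1) // k ≠ ℓ},
      vGram v ℓ i k * Matrix.of (fun i j : {k : Fin (n + 1) // k ≠ ℓ} =>
        ⟪nvec hv hn i.1, nvec hv hn j.1⟫) k j
      = ⟪v i.1 - v ℓ, (⟪nvec hv hn k.1, nvec hv hn j.1⟫ : ℝ) • (v k.1 - v ℓ)⟫ := by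
    intro k
    rw [real_inner_smul_right, vGram, mul_comm]
    rfl
  rw [Finset.sum_congr rfl fun k _ => h1 k, ← inner_sum, expand hv hn ℓ,
    real_inner_comm, inner_nvec]
  simp only [if_neg j.2]
  have : (j.1 = i.1) ↔ (i = j) := by rw [Subtype.ext_iff]; exact eq_comm
  by_cases h : i = j
  · simp [this, h, Matrix.one_apply]
  · simp [Matrix.one_apply, h, this]


lemma rowsum (hv : AffineIndependent ℝ v) (hn : 1 ≤ n) (ℓ i : Fin (n + 1)) :
    ∑ k : {k : Fin (n + 1) // k ≠ ℓ}, ⟪nvec hv hn i, nvec hv hn k.1⟫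
      = -⟪nvec hv hn i, nvec hv hn ℓ⟫ := by
  rw [← inner_sum, sum_nvec_compl, inner_neg_right]

lemma sub_combo {ι : Type*} (t : Finset ι) (w : ι → ℝ) (hw1 : ∑ τ ∈ t, w τ = 1)
    (x : EuclideanSpace ℝ (Fin n)) (z : ι → EuclideanSpace ℝ (Fin n)) :
    x - ∑ τ ∈ t, w τ • z τ = ∑ τ ∈ t, w τ • (x - z τ) := by
  rw [show ∑ τ ∈ t, w τ • (x - z τ) = ∑ τ ∈ t, (w τ • x - w τ • z τ) from
    Finset.sum_congr rfl fun τ _ => smul_sub _ _ _, Finset.sum_sub_distrib,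
    ← Finset.sum_smul, hw1, one_smul]

lemma np_to_proj (hv : AffineIndependent ℝ v) (hn : 1 ≤ n)
    (hNP : ∀ i j, i ≠ j → ⟪nvec hv hn i, nvec hv hn j⟫ ≤ 0) (j : Fin (n + 1)) :
    ProjInHull (v j) v {k | k ≠ j} := by
  classical
  set N : ℝ := ⟪nvec hv hn j, nvec hv hn j⟫ with hN
  have hNpos : 0 < N := nvec_pos hv hn j
  set t : Finset (Fin (n + 1)) := Finset.univ.erase j with ht
  set w : Fin (n + 1) → ℝ := fun k => -⟪nvec hv hn k, nvec hv hn j⟫ / N with hw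
  have hw0 : ∀ k ∈ t, 0 ≤ w k := by
    intro k hk
    have hkj : k ≠ j := (Finset.mem_erase.mp hk).1
    have h := hNP k j hkj
    rw [hw]
    exact div_nonneg (neg_nonneg.mpr h) hNpos.le
  have hsum0 : ∑ k, ⟪nvec hv hn k, nvec hv hn j⟫ = (0 : ℝ) := by
    rw [← sum_inner, sum_nvec, inner_zero_left]
  have hsumt : ∑ k ∈ t, ⟪nvec hv hn k, nvec hv hn j⟫ = -N := by
    have h := Finset.add_sum_erase Finset.univ
      (fun k => (⟪nvec hv hn k, nvec hv hn j⟫ : ℝ)) (Finset.mem_univ j)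
    rw [hsum0] at h
    rw [ht]
    linarith [h]
  have hw1 : ∑ k ∈ t, w k = 1 := by
    rw [hw]
    rw [show (fun k => -(⟪nvec hv hn k, nvec hv hn j⟫ : ℝ) / N) = fun k => (-(⟪nvec hv hn k, nvec hv hn j⟫ : ℝ)) / N from rfl, ← Finset.sum_div]
    have hh : ∑ k ∈ t, -(⟪nvec hv hn k, nvec hv hn j⟫ : ℝ) = N := by
      rw [Finset.sum_neg_distrib, hsumt]; ring
    rw [hh]
    field_simp
  set p : EuclideanSpace ℝ (Fin n) := ∑ k ∈ t, w k • v k with hp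
  have hmem : p ∈ convexHull ℝ (v '' {k | k ≠ j}) := by
    have h := Finset.centerMass_mem_convexHull (s := v '' {k | k ≠ j}) t hw0
      (by rw [hw1]; norm_num)
      (fun i hi => ⟨i, (Finset.mem_erase.mp hi).1, rfl⟩)
    rwa [Finset.centerMass_eq_of_sum_1 _ _ hw1] at h
  have hvjp : v j - p = ∑ k ∈ t, w k • (v j - v k) := sub_combo t w hw1 _ _
  have hdiff : v j - p = N⁻¹ • nvec hv hn j := by
    rw [← sub_eq_zero]
    refine perp_nvec hv hn j _ fun a ha => ?_
    have hat : a ∈ t := Finset.mem_erase.mpr ⟨ha, Finset.mem_univ a⟩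
    have h1 : ⟪nvec hv hn a, v j - p⟫ = -w a := by
      rw [hvjp, inner_sum]
      have hterm : ∀ k ∈ t, (⟪nvec hv hn a, w k • (v j - v k)⟫ : ℝ)
          = if a = k then -w k else 0 := by
        intro k hk
        rw [real_inner_smul_right, inner_nvec, if_neg ha]
        by_cases hak : a = k
        · simp [hak]
        · simp [hak]
      rw [Finset.sum_congr rfl hterm, Finset.sum_ite_eq t a (fun k => -w k), if_pos hat]
    rw [inner_sub_right, h1, real_inner_smul_right, hw]
    field_simp
    ring
  refine ⟨p, hmem, fun a ha b hb => ?_⟩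
  rw [hdiff, real_inner_smul_left, inner_nvec, if_neg (Ne.symm ha), if_neg (Ne.symm hb)]
  ring

lemma proj_to_np (hv : AffineIndependent ℝ v) (hn : 1 ≤ n)
    (h4 : ∀ j : Fin (n + 1), ProjInHull (v j) v {k | k ≠ j}) :
    ∀ i j, i ≠ j → ⟪nvec hv hn i, nvec hv hn j⟫ ≤ 0 := by
  intro i j hij
  obtain ⟨p, hp, horth⟩ := h4 j
  rw [_root_.convexHull_eq] at hp
  obtain ⟨ι, t, w, z, hw0, hw1, hz, hcm⟩ := hp
  have hpsum : p = ∑ τ ∈ t, w τ • z τ := by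
    rw [← hcm, Finset.centerMass_eq_of_sum_1 _ _ hw1]
  have hvjp : v j - p = ∑ τ ∈ t, w τ • (v j - z τ) := by
    rw [hpsum]; exact sub_combo t w hw1 _ _
  have hzk : ∀ τ ∈ t, ∃ k : Fin (n + 1), k ≠ j ∧ z τ = v k := by
    intro τ hτ; obtain ⟨k, hk, he⟩ := hz τ hτ; exact ⟨k, hk, he.symm⟩
  have hinner : ∀ m : Fin (n + 1), (⟪nvec hv hn m, v j - p⟫ : ℝ)
      = ∑ τ ∈ t, w τ * ⟪nvec hv hn m, v j - z τ⟫ := by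
    intro m
    rw [hvjp, inner_sum]
    exact Finset.sum_congr rfl fun τ _ => real_inner_smul_right _ _ _
  have h1 : (⟪nvec hv hn j, v j - p⟫ : ℝ) = 1 := by
    rw [hinner]
    have hterm : ∀ τ ∈ t, w τ * (⟪nvec hv hn j, v j - z τ⟫ : ℝ) = w τ := by
      intro τ hτ; obtain ⟨k, hkj, he⟩ := hzk τ hτ
      rw [he, inner_nvec, if_pos rfl, if_neg (Ne.symm hkj)]
      ring
    rw [Finset.sum_congr rfl hterm, hw1]
  have h2 : (⟪nvec hv hn i, v j - p⟫ : ℝ) ≤ 0 := by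
    rw [hinner]
    refine Finset.sum_nonpos fun τ hτ => ?_
    obtain ⟨k, hkj, he⟩ := hzk τ hτ
    rw [he, inner_nvec, if_neg hij]
    refine mul_nonpos_of_nonneg_of_nonpos (hw0 τ hτ) ?_
    by_cases hik : i = k <;> simp [hik]
  set N : ℝ := ⟪nvec hv hn j, nvec hv hn j⟫ with hN
  have hNpos : 0 < N := nvec_pos hv hn j
  haveI : Nontrivial (Fin (n + 1)) := by rw [Fin.nontrivial_iff_two_le]; omega
  obtain ⟨ℓ, hℓ⟩ := exists_ne j
  set zz : EuclideanSpace ℝ (Fin n) := (v j - p) - N⁻¹ • nvec hv hn j with hzz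
  have hzzj : (⟪nvec hv hn j, zz⟫ : ℝ) = 0 := by
    rw [hzz, inner_sub_right, h1, real_inner_smul_right, ← hN]
    field_simp
    ring
  have hzz0 : zz = 0 := by
    rw [← inner_self_eq_zero (𝕜 := ℝ)]
    have hx : (⟪zz, zz⟫ : ℝ) = ⟪zz, ∑ k : {k : Fin (n + 1) // k ≠ ℓ},
        ⟪nvec hv hn k.1, zz⟫ • (v k.1 - v ℓ)⟫ := by rw [expand]
    rw [hx, inner_sum]
    refine Finset.sum_eq_zero fun k _ => ?_
    rw [real_inner_smul_right]
    by_cases hk : k.1 = j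
    · have : (⟪nvec hv hn k.1, zz⟫ : ℝ) = 0 := by rw [hk]; exact hzzj
      rw [this, zero_mul]
    · have hA : (⟪v j - p, v k.1 - v ℓ⟫ : ℝ) = 0 := horth k.1 hk ℓ hℓ
      have hB : (⟪nvec hv hn j, v k.1 - v ℓ⟫ : ℝ) = 0 := by
        rw [inner_nvec, if_neg (Ne.symm hk), if_neg (Ne.symm hℓ)]; ring
      have hC : (⟪zz, v k.1 - v ℓ⟫ : ℝ) = 0 := by
        rw [hzz, inner_sub_left, hA, real_inner_smul_left, hB]; ring
      rw [hC, mul_zero]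
  have hy : v j - p = N⁻¹ • nvec hv hn j := by
    have := hzz0; rw [hzz, sub_eq_zero] at this; exact this
  rw [hy, real_inner_smul_right] at h2
  nlinarith [inv_pos.mpr hNpos]

end Stmt0Aux

open Stmt0Aux

theorem stmt0 (n : ℕ) (hn : 1 ≤ n) (v : Fin (n + 1) → EuclideanSpace ℝ (Fin n))
    (hv : AffineIndependent ℝ v) :
    List.TFAE
      [ ∃ ℓ, IsStieltjes (vGram v ℓ)⁻¹ ∧ IsWDD (vGram v ℓ)⁻¹,
        ∀ ℓ, ∀ i j, i ≠ j → (vGram v ℓ)⁻¹ i j ≤ 0,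
        ∀ ℓ, IsWDD (vGram v ℓ)⁻¹,
        ∀ j : Fin (n + 1), ProjInHull (v j) v {k | k ≠ j} ] := by
    classical
  have e3 : (∀ ℓ, IsWDD (vGram v ℓ)⁻¹) ↔
      (∀ i j : Fin (n + 1), i ≠ j → ⟪nvec hv hn i, nvec hv hn j⟫ ≤ 0) := by
    constructor
    · intro h i j hij
      have h2 := h j ⟨i, hij⟩
      rw [vGram_inv hv hn j] at h2
      have h3 : (0:ℝ) ≤ ∑ k : {k : Fin (n + 1) // k ≠ j}, ⟪nvec hv hn i, nvec hv hn k.1⟫ := h2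
      rw [rowsum hv hn j i] at h3
      linarith
    · intro h ℓ
      intro i
      rw [vGram_inv hv hn ℓ]
      show (0:ℝ) ≤ ∑ k : {k : Fin (n + 1) // k ≠ ℓ}, ⟪nvec hv hn i.1, nvec hv hn k.1⟫
      rw [rowsum hv hn ℓ i.1]
      have := h i.1 ℓ i.2
      linarith
  have e2 : (∀ ℓ, ∀ i j, i ≠ j → (vGram v ℓ)⁻¹ i j ≤ 0) ↔
      (∀ i j : Fin (n + 1), i ≠ j → ⟪nvec hv hn i, nvec hv hn j⟫ ≤ 0) := by
    constructor
    · intro h i j hij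
      by_cases hex : ∃ ℓ : Fin (n + 1), ℓ ≠ i ∧ ℓ ≠ j
      · obtain ⟨ℓ, h1, h2⟩ := hex
        have h3 := h ℓ ⟨i, Ne.symm h1⟩ ⟨j, Ne.symm h2⟩
          (fun hh => hij (congrArg Subtype.val hh))
        rw [vGram_inv hv hn ℓ] at h3
        exact h3
      · push_neg at hex
        have huniv : (Finset.univ : Finset (Fin (n + 1))) = {i, j} := by
          ext x
          simp only [Finset.mem_univ, Finset.mem_insert, Finset.mem_singleton, true_iff]
          by_cases hxi : x = i
          · exact Or.inl hxi
          · exact Or.inr (hex x hxi)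
        have hsum := sum_nvec hv hn
        rw [huniv, Finset.sum_pair hij] at hsum
        have hneg : nvec hv hn j = -nvec hv hn i := eq_neg_of_add_eq_zero_right hsum
        rw [hneg, inner_neg_right]
        have := real_inner_self_nonneg (x := nvec hv hn i)
        linarith
    · intro h ℓ i j hij
      rw [vGram_inv hv hn ℓ]
      exact h i.1 j.1 (fun hh => hij (Subtype.ext hh))
  have e1 : (∃ ℓ, IsStieltjes (vGram v ℓ)⁻¹ ∧ IsWDD (vGram v ℓ)⁻¹) ↔
      (∀ i j : Fin (n + 1), i ≠ j → ⟪nvec hv hn i, nvec hv hn j⟫ ≤ 0) := by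
    constructor
    · rintro ⟨ℓ, ⟨hPD, hoff⟩, hwdd⟩
      have claim : ∀ i : Fin (n + 1), i ≠ ℓ → ⟪nvec hv hn i, nvec hv hn ℓ⟫ ≤ 0 := by
        intro i hi
        have h2 := hwdd ⟨i, hi⟩
        rw [vGram_inv hv hn ℓ] at h2
        have h3 : (0:ℝ) ≤ ∑ k : {k : Fin (n + 1) // k ≠ ℓ}, ⟪nvec hv hn i, nvec hv hn k.1⟫ := h2
        rw [rowsum hv hn ℓ i] at h3
        linarith
      intro i j hij
      by_cases hi : i = ℓ
      · subst hi
        rw [real_inner_comm]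
        exact claim j (Ne.symm hij)
      · by_cases hj : j = ℓ
        · subst hj
          exact claim i hi
        · have h3 := hoff ⟨i, hi⟩ ⟨j, hj⟩ (fun hh => hij (congrArg Subtype.val hh))
          rw [vGram_inv hv hn ℓ] at h3
          exact h3
    · intro h
      refine ⟨0, ⟨(vGram_posdef hv hn 0).inv, ?_⟩, ?_⟩
      · intro i j hij
        rw [vGram_inv hv hn 0]
        exact h i.1 j.1 (fun hh => hij (Subtype.ext hh))
      · exact e3.mpr h 0
  have e4 : (∀ j : Fin (n + 1), ProjInHull (v j) v {k | k ≠ j}) ↔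
      (∀ i j : Fin (n + 1), i ≠ j → ⟪nvec hv hn i, nvec hv hn j⟫ ≤ 0) :=
    ⟨fun h4 => proj_to_np hv hn h4, fun h => np_to_proj hv hn h⟩
  tfae_have 1 ↔ 2 := e1.trans e2.symm
  tfae_have 1 ↔ 3 := e1.trans e3.symm
  tfae_have 1 ↔ 4 := e1.trans e4.symm
  tfae_finish
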